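/- arXiv:0911.4235 — 2 statements merged into one kernel-verified Lean document; each statement's English description precedes it below -/
import Mathlib

section
/- The group with presentation ⟨x₁, x₂, x₃ | x₁x₂ = x₂x₁, (x₂x₃)^n = (x₃x₂)^n, x₁x₂x₃ = x₂x₃x₁, x₂(x₁x₂x₃) = (x₁x₂x₃)x₂, x₃x₁x₂ = x₁x₂x₃⟩ (for any fixed natural number n) is isomorphic to the free abelian group ℤ³. -/
open FreeGroup in
theorem stmt_0 (n : ℕ) :
    Nonempty
      (PresentedGroup
          ({ of 0 * of 1 * (of 1 * of 0)⁻¹,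
             (of 1 * of 2) ^ n * ((of 2 * of 1) ^ n)⁻¹,
             of 0 * of 1 * of 2 * (of 1 * of 2 * of 0)⁻¹,
             of 1 * (of 0 * of 1 * of 2) * (of 0 * of 1 * of 2 * of 1)⁻¹,
             of 2 * of 0 * of 1 * (of 0 * of 1 * of 2)⁻¹ } : Set (FreeGroup (Fin 3)))
        ≃* Multiplicative (ℤ × ℤ × ℤ)) := by
  set rels : Set (FreeGroup (Fin 3)) :=
      { of 0 * of 1 * (of 1 * of 0)⁻¹,
        (of 1 * of 2) ^ n * ((of 2 * of 1) ^ n)⁻¹,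
        of 0 * of 1 * of 2 * (of 1 * of 2 * of 0)⁻¹,
        of 1 * (of 0 * of 1 * of 2) * (of 0 * of 1 * of 2 * of 1)⁻¹,
        of 2 * of 0 * of 1 * (of 0 * of 1 * of 2)⁻¹ } with hrels
  -- target generators
  set e : Fin 3 → Multiplicative (ℤ × ℤ × ℤ) :=
    ![Multiplicative.ofAdd (1,0,0), Multiplicative.ofAdd (0,1,0), Multiplicative.ofAdd (0,0,1)]
    with he
  have hrel : ∀ r ∈ rels, FreeGroup.lift e r = 1 := by
    intro r hr
    simp only [hrels, Set.mem_insert_iff, Set.mem_singleton_iff] at hr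
    rcases hr with rfl | rfl | rfl | rfl | rfl <;>
      · simp only [_root_.map_mul, _root_.map_inv, map_pow, FreeGroup.lift_apply_of]
        generalize e 0 = a
        generalize e 1 = b
        generalize e 2 = c
        refine Multiplicative.toAdd.injective ?_
        simp only [toAdd_mul, toAdd_inv, toAdd_pow, toAdd_one]
        abel
  -- generators of the presented group
  set x : Fin 3 → PresentedGroup rels := fun i => PresentedGroup.mk rels (FreeGroup.of i) with hx
  have hone : ∀ r ∈ rels, PresentedGroup.mk rels r = 1 := fun r hr =>
    (QuotientGroup.eq_one_iff r).mpr (Subgroup.subset_normalClosure hr)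
  have h1 : x 0 * x 1 = x 1 * x 0 := by
    have h := hone _ (show (of 0 * of 1 * (of 1 * of 0)⁻¹ : FreeGroup (Fin 3)) ∈ rels by
      simp [hrels])
    simp only [_root_.map_mul, _root_.map_inv] at h
    exact mul_inv_eq_one.mp h
  have h3 : x 0 * x 1 * x 2 = x 1 * x 2 * x 0 := by
    have h := hone _ (show (of 0 * of 1 * of 2 * (of 1 * of 2 * of 0)⁻¹ :
        FreeGroup (Fin 3)) ∈ rels by simp [hrels])
    simp only [_root_.map_mul, _root_.map_inv] at h
    exact mul_inv_eq_one.mp h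
  have h4 : x 1 * (x 0 * x 1 * x 2) = x 0 * x 1 * x 2 * x 1 := by
    have h := hone _ (show (of 1 * (of 0 * of 1 * of 2) * (of 0 * of 1 * of 2 * of 1)⁻¹ :
        FreeGroup (Fin 3)) ∈ rels by simp [hrels])
    simp only [_root_.map_mul, _root_.map_inv] at h
    exact mul_inv_eq_one.mp h
  have c01 : Commute (x 0) (x 1) := h1
  have c12 : Commute (x 1) (x 2) := by
    have key : x 0 * x 1 * (x 1 * x 2) = x 0 * x 1 * (x 2 * x 1) := by
      calc x 0 * x 1 * (x 1 * x 2) = x 1 * x 0 * (x 1 * x 2) := by rw [h1]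
        _ = x 1 * (x 0 * x 1 * x 2) := by group
        _ = x 0 * x 1 * x 2 * x 1 := h4
        _ = x 0 * x 1 * (x 2 * x 1) := by group
    exact mul_left_cancel key
  have c02 : Commute (x 0) (x 2) := by
    have key : x 1 * (x 0 * x 2) = x 1 * (x 2 * x 0) := by
      calc x 1 * (x 0 * x 2) = x 1 * x 0 * x 2 := by group
        _ = x 0 * x 1 * x 2 := by rw [h1]
        _ = x 1 * x 2 * x 0 := h3
        _ = x 1 * (x 2 * x 0) := by group
    exact mul_left_cancel key
  -- the two homomorphisms
  let f : PresentedGroup rels →* Multiplicative (ℤ × ℤ × ℤ) := PresentedGroup.toGroup hrel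
  let g : Multiplicative (ℤ × ℤ × ℤ) →* PresentedGroup rels :=
    MonoidHom.mk' (fun p => x 0 ^ p.toAdd.1 * x 1 ^ p.toAdd.2.1 * x 2 ^ p.toAdd.2.2)
      (by
        intro p q
        show x 0 ^ (p.toAdd.1 + q.toAdd.1) * x 1 ^ (p.toAdd.2.1 + q.toAdd.2.1) *
            x 2 ^ (p.toAdd.2.2 + q.toAdd.2.2) =
          x 0 ^ p.toAdd.1 * x 1 ^ p.toAdd.2.1 * x 2 ^ p.toAdd.2.2 *
            (x 0 ^ q.toAdd.1 * x 1 ^ q.toAdd.2.1 * x 2 ^ q.toAdd.2.2)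
        generalize p.toAdd.1 = a
        generalize p.toAdd.2.1 = b
        generalize p.toAdd.2.2 = c
        generalize q.toAdd.1 = a'
        generalize q.toAdd.2.1 = b'
        generalize q.toAdd.2.2 = c'
        rw [zpow_add, zpow_add, zpow_add]
        simp only [mul_assoc]
        rw [← mul_assoc (x 2 ^ c) (x 0 ^ a'), (c02.symm.zpow_zpow c a').eq, mul_assoc]
        rw [← mul_assoc (x 1 ^ b) (x 0 ^ a'), (c01.symm.zpow_zpow b a').eq, mul_assoc]
        rw [← mul_assoc (x 2 ^ c) (x 1 ^ b'), (c12.symm.zpow_zpow c b').eq, mul_assoc])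
  have hf0 : f (x 0) = e 0 := PresentedGroup.toGroup.of hrel
  have hf1 : f (x 1) = e 1 := PresentedGroup.toGroup.of hrel
  have hf2 : f (x 2) = e 2 := PresentedGroup.toGroup.of hrel
  have hgf : g.comp f = MonoidHom.id _ := by
    ext i
    fin_cases i
    · show g (f (x 0)) = x 0
      rw [hf0]
      show x 0 ^ (1:ℤ) * x 1 ^ (0:ℤ) * x 2 ^ (0:ℤ) = x 0
      simp
    · show g (f (x 1)) = x 1
      rw [hf1]
      show x 0 ^ (0:ℤ) * x 1 ^ (1:ℤ) * x 2 ^ (0:ℤ) = x 1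
      simp
    · show g (f (x 2)) = x 2
      rw [hf2]
      show x 0 ^ (0:ℤ) * x 1 ^ (0:ℤ) * x 2 ^ (1:ℤ) = x 2
      simp
  have hfg : f.comp g = MonoidHom.id _ := by
    refine MonoidHom.ext fun p => ?_
    show f (x 0 ^ p.toAdd.1 * x 1 ^ p.toAdd.2.1 * x 2 ^ p.toAdd.2.2) = p
    rw [_root_.map_mul, _root_.map_mul, map_zpow, map_zpow, map_zpow, hf0, hf1, hf2]
    refine Multiplicative.toAdd.injective ?_
    simp only [toAdd_mul, toAdd_zpow, he]
    show p.toAdd.1 • ((1,0,0) : ℤ × ℤ × ℤ) + p.toAdd.2.1 • ((0,1,0) : ℤ × ℤ × ℤ)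
        + p.toAdd.2.2 • ((0,0,1) : ℤ × ℤ × ℤ) = p.toAdd
    simp [Prod.ext_iff]
  exact ⟨MonoidHom.toMulEquiv f g hgf hfg⟩
end

section
/- The group with presentation ⟨x₁, x₂, x₃, x₄ | xᵢx_{i+1} = x_{i+1}xᵢ for i = 1,2,3, and xᵢ(x₁x₂x₃x₄) = (x₁x₂x₃x₄)xᵢ for i = 1,2,3,4⟩ is isomorphic to the free abelian group ℤ⁴. -/
namespace Stmt1Aux

open FreeGroup

def rels : Set (FreeGroup (Fin 4)) :=
  { of 0 * of 1 * (of 1 * of 0)⁻¹,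
    of 1 * of 2 * (of 2 * of 1)⁻¹,
    of 2 * of 3 * (of 3 * of 2)⁻¹,
    of 0 * (of 0 * of 1 * of 2 * of 3) * (of 0 * of 1 * of 2 * of 3 * of 0)⁻¹,
    of 1 * (of 0 * of 1 * of 2 * of 3) * (of 0 * of 1 * of 2 * of 3 * of 1)⁻¹,
    of 2 * (of 0 * of 1 * of 2 * of 3) * (of 0 * of 1 * of 2 * of 3 * of 2)⁻¹,
    of 3 * (of 0 * of 1 * of 2 * of 3) * (of 0 * of 1 * of 2 * of 3 * of 3)⁻¹ }

abbrev G := PresentedGroup rels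

lemma mk_rel {r : FreeGroup (Fin 4)} (h : r ∈ rels) : PresentedGroup.mk rels r = 1 :=
  (QuotientGroup.eq_one_iff r).2 (Subgroup.subset_normalClosure h)

abbrev x (i : Fin 4) : G := PresentedGroup.of i

lemma h01 : x 0 * x 1 = x 1 * x 0 :=
  mul_inv_eq_one.1 (by simpa [x, PresentedGroup.of] using mk_rel (Or.inl rfl))

lemma h12 : x 1 * x 2 = x 2 * x 1 :=
  mul_inv_eq_one.1 (by simpa [x, PresentedGroup.of] using mk_rel (Or.inr (Or.inl rfl)))

lemma h23 : x 2 * x 3 = x 3 * x 2 :=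
  mul_inv_eq_one.1 (by simpa [x, PresentedGroup.of] using mk_rel (Or.inr (Or.inr (Or.inl rfl))))

lemma hw0 : x 0 * (x 0 * x 1 * x 2 * x 3) = x 0 * x 1 * x 2 * x 3 * x 0 := by
  have h := mk_rel (show _ ∈ rels from Or.inr (Or.inr (Or.inr (Or.inl rfl))))
  exact mul_inv_eq_one.1 (by simpa [x, PresentedGroup.of] using h)

lemma hw1 : x 1 * (x 0 * x 1 * x 2 * x 3) = x 0 * x 1 * x 2 * x 3 * x 1 := by
  have h := mk_rel (show _ ∈ rels from Or.inr (Or.inr (Or.inr (Or.inr (Or.inl rfl)))))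
  exact mul_inv_eq_one.1 (by simpa [x, PresentedGroup.of] using h)

lemma hw2 : x 2 * (x 0 * x 1 * x 2 * x 3) = x 0 * x 1 * x 2 * x 3 * x 2 := by
  have h := mk_rel (show _ ∈ rels from Or.inr (Or.inr (Or.inr (Or.inr (Or.inr (Or.inl rfl))))))
  exact mul_inv_eq_one.1 (by simpa [x, PresentedGroup.of] using h)

lemma h13 : x 1 * x 3 = x 3 * x 1 := by
  have key : x 1 * (x 0 * x 1 * x 2 * x 3) = x 0 * (x 1 * (x 1 * (x 2 * x 3))) := by
    calc x 1 * (x 0 * x 1 * x 2 * x 3) = (x 1 * x 0) * (x 1 * (x 2 * x 3)) := by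
          simp only [mul_assoc]
      _ = (x 0 * x 1) * (x 1 * (x 2 * x 3)) := by rw [h01]
      _ = _ := by simp only [mul_assoc]
  have h : x 0 * (x 1 * (x 1 * (x 2 * x 3))) = x 0 * (x 1 * (x 2 * (x 3 * x 1))) := by
    rw [← key, hw1]; simp only [mul_assoc]
  have h2 : x 1 * (x 2 * x 3) = x 2 * (x 3 * x 1) := mul_left_cancel (mul_left_cancel h)
  have h3 : x 2 * (x 1 * x 3) = x 2 * (x 3 * x 1) := by
    rw [← h2, ← mul_assoc, ← h12, mul_assoc]
  exact mul_left_cancel h3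

lemma h02 : x 0 * x 2 = x 2 * x 0 := by
  have key : x 2 * (x 0 * x 1 * x 2 * x 3) = (x 2 * x 0 * x 1) * (x 2 * x 3) := by
    simp only [mul_assoc]
  have key2 : x 0 * x 1 * x 2 * x 3 * x 2 = (x 0 * x 1 * x 2) * (x 2 * x 3) := by
    calc x 0 * x 1 * x 2 * x 3 * x 2 = (x 0 * x 1 * x 2) * (x 3 * x 2) := by
          simp only [mul_assoc]
      _ = _ := by rw [← h23]
  have h : (x 2 * x 0 * x 1) * (x 2 * x 3) = (x 0 * x 1 * x 2) * (x 2 * x 3) := by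
    rw [← key, hw2, key2]
  have h2 : x 2 * x 0 * x 1 = x 0 * x 1 * x 2 := mul_right_cancel h
  have h3 : x 2 * x 0 * x 1 = x 0 * x 2 * x 1 := by
    rw [h2, mul_assoc, h12, ← mul_assoc]
  exact (mul_right_cancel h3).symm

lemma h03 : x 0 * x 3 = x 3 * x 0 := by
  have h : x 0 * (x 0 * x 1 * x 2 * x 3) = x 0 * (x 1 * x 2 * x 3 * x 0) := by
    rw [hw0]; simp only [mul_assoc]
  have h2 : x 0 * x 1 * x 2 * x 3 = x 1 * x 2 * x 3 * x 0 := by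
    have := mul_left_cancel h; simpa only [mul_assoc] using this
  have h3 : x 1 * (x 2 * (x 0 * x 3)) = x 1 * (x 2 * (x 3 * x 0)) := by
    calc x 1 * (x 2 * (x 0 * x 3)) = x 1 * ((x 2 * x 0) * x 3) := by simp only [mul_assoc]
      _ = x 1 * ((x 0 * x 2) * x 3) := by rw [h02]
      _ = (x 1 * x 0) * (x 2 * x 3) := by simp only [mul_assoc]
      _ = (x 0 * x 1) * (x 2 * x 3) := by rw [h01]
      _ = x 0 * x 1 * x 2 * x 3 := by simp only [mul_assoc]
      _ = x 1 * x 2 * x 3 * x 0 := h2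
      _ = _ := by simp only [mul_assoc]
  exact mul_left_cancel (mul_left_cancel h3)

lemma comm_gen : ∀ i j : Fin 4, Commute (x i) (x j) := by
  intro i j
  fin_cases i <;> fin_cases j <;>
    first
      | exact Commute.refl _
      | exact h01 | exact h01.symm
      | exact h12 | exact h12.symm
      | exact h23 | exact h23.symm
      | exact h02 | exact h02.symm
      | exact h13 | exact h13.symm
      | exact h03 | exact h03.symm

lemma comm_all : ∀ a b : G, a * b = b * a := by
  have mem_top : ∀ a : G, a ∈ Subgroup.closure (Set.range (PresentedGroup.of : Fin 4 → G)) := by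
    intro a; rw [PresentedGroup.closure_range_of]; trivial
  intro a b
  refine Subgroup.closure_induction₂
    (p := fun a b _ _ => Commute a b) ?_ ?_ ?_ ?_ ?_ ?_ ?_ (mem_top a) (mem_top b)
  · rintro _ _ ⟨i, rfl⟩ ⟨j, rfl⟩; exact comm_gen i j
  · intro y _; exact Commute.one_left y
  · intro y _; exact Commute.one_right y
  · intro u v w _ _ _ h1 h2; exact h1.mul_left h2
  · intro u v w _ _ _ h1 h2; exact h1.mul_right h2
  · intro u v _ _ h; exact h.inv_left
  · intro u v _ _ h; exact h.inv_right

noncomputable instance : CommGroup G :=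
  { (inferInstance : Group G) with mul_comm := comm_all }

abbrev T := Multiplicative (ℤ × ℤ × ℤ × ℤ)

lemma mul4 {H : Type*} [CommGroup H] (a b c d a' b' c' d' : H) :
    a * a' * (b * b') * (c * c') * (d * d') = a * b * c * d * (a' * b' * c' * d') := by
  simp only [mul_assoc, mul_comm, mul_left_comm]

def b : Fin 4 → T :=
  ![Multiplicative.ofAdd (1,0,0,0), Multiplicative.ofAdd (0,1,0,0),
    Multiplicative.ofAdd (0,0,1,0), Multiplicative.ofAdd (0,0,0,1)]

lemma comm_aux {H : Type*} [CommGroup H] (a w : H) : a * w * (w * a)⁻¹ = 1 := by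
  rw [mul_comm w a, mul_inv_cancel]

lemma hf : ∀ r ∈ rels, FreeGroup.lift b r = 1 := by
  rintro r (rfl | rfl | rfl | rfl | rfl | rfl | rfl) <;>
    · simp only [_root_.map_mul, _root_.map_inv]
      exact comm_aux _ _

noncomputable def f : G →* T := PresentedGroup.toGroup hf

noncomputable def g : T →* G where
  toFun p := x 0 ^ p.toAdd.1 * x 1 ^ p.toAdd.2.1 * x 2 ^ p.toAdd.2.2.1 * x 3 ^ p.toAdd.2.2.2
  map_one' := by
    simp only [toAdd_one, Prod.fst_zero, Prod.snd_zero, zpow_zero, one_mul]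
  map_mul' p q := by
    simp only [toAdd_mul, Prod.fst_add, Prod.snd_add, zpow_add]
    exact mul4 _ _ _ _ _ _ _ _

lemma f_of (i : Fin 4) : f (x i) = b i := PresentedGroup.toGroup.of hf

lemma left_inv : ∀ a : G, g (f a) = a := by
  have hcomp : g.comp f = MonoidHom.id G := by
    refine PresentedGroup.ext fun i => ?_
    fin_cases i <;>
    · rw [MonoidHom.comp_apply, MonoidHom.id_apply, show ((PresentedGroup.of _ : G)) = x _ from rfl,
        f_of]
      simp [g, b, Matrix.cons_val_zero, Matrix.cons_val_one, Matrix.head_cons,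
        Matrix.cons_val_two, Matrix.tail_cons, Matrix.cons_val_three]
  intro a
  exact DFunLike.congr_fun hcomp a

lemma right_inv : ∀ p : T, f (g p) = p := by
  intro p
  refine Multiplicative.toAdd.injective ?_
  simp only [g, MonoidHom.coe_mk, OneHom.coe_mk, _root_.map_mul, map_zpow, f_of, b]
  simp [Prod.ext_iff]

noncomputable def e : G ≃* T :=
  { toFun := f, invFun := g, left_inv := left_inv, right_inv := right_inv,
    map_mul' := map_mul f }

end Stmt1Aux

open FreeGroup in
theorem stmt_1 :
    Nonempty
      (PresentedGroup
          ({ of 0 * of 1 * (of 1 * of 0)⁻¹,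
             of 1 * of 2 * (of 2 * of 1)⁻¹,
             of 2 * of 3 * (of 3 * of 2)⁻¹,
             of 0 * (of 0 * of 1 * of 2 * of 3) * (of 0 * of 1 * of 2 * of 3 * of 0)⁻¹,
             of 1 * (of 0 * of 1 * of 2 * of 3) * (of 0 * of 1 * of 2 * of 3 * of 1)⁻¹,
             of 2 * (of 0 * of 1 * of 2 * of 3) * (of 0 * of 1 * of 2 * of 3 * of 2)⁻¹,
             of 3 * (of 0 * of 1 * of 2 * of 3) * (of 0 * of 1 * of 2 * of 3 * of 3)⁻¹ }
            : Set (FreeGroup (Fin 4)))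
        ≃* Multiplicative (ℤ × ℤ × ℤ × ℤ)) := ⟨Stmt1Aux.e⟩
end
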